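/- arXiv:1508.00792 — 2 statements merged into one kernel-verified Lean document; each statement's English description precedes it below -/
import Mathlib

section
/- (Proposition 1.) Let L₀ be an N×N Hermitian positive definite complex matrix, and define a sequence of matrices by L_{k+1} = (L_k⁻¹ + Δ(L_k))⁻¹ for k = 0,1,2,…. Then every L_k (k ≥ 0) is Hermitian positive definite (in particular all inverses in the recursion exist). -/
open Matrix
open scoped ComplexOrder

/-- Δ(L) = (1/n)∑ᵢ Uᵢ(Uᵢ*LUᵢ)⁻¹Uᵢ* − (I+L)⁻¹. -/
noncomputable def Delta {N n : ℕ} {k : Fin n → ℕ}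
    (U : (i : Fin n) → Matrix (Fin N) (Fin (k i)) ℂ)
    (L : Matrix (Fin N) (Fin N) ℂ) : Matrix (Fin N) (Fin N) ℂ :=
  (n : ℂ)⁻¹ • (∑ i, U i * ((U i)ᴴ * L * U i)⁻¹ * (U i)ᴴ) - (1 + L)⁻¹

lemma aux_posDef_conj {N K : ℕ} {L : Matrix (Fin N) (Fin N) ℂ} (hL : L.PosDef)
    (U : Matrix (Fin N) (Fin K) ℂ) (hU : Uᴴ * U = 1) :
    (Uᴴ * L * U).PosDef := by
  refine posDef_iff_dotProduct_mulVec.mpr ⟨isHermitian_conjTranspose_mul_mul U hL.1, fun x hx => ?_⟩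
  have hUx : U *ᵥ x ≠ 0 := by
    intro h
    apply hx
    have hid : Uᴴ *ᵥ (U *ᵥ x) = x := by rw [mulVec_mulVec, hU, one_mulVec]
    rw [h, mulVec_zero] at hid
    exact hid.symm
  have hq := hL.dotProduct_mulVec_pos hUx
  simpa only [star_mulVec, dotProduct_mulVec, vecMul_vecMul] using hq

lemma aux_smul_posSemidef {N : ℕ} (c : ℝ) (hc : 0 ≤ c) {M : Matrix (Fin N) (Fin N) ℂ}
    (hM : M.PosSemidef) : ((c : ℂ) • M).PosSemidef := by
  rw [posSemidef_iff_dotProduct_mulVec]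
  constructor
  · unfold Matrix.IsHermitian
    rw [conjTranspose_smul, hM.1.eq]
    simp [Complex.conj_ofReal]
  · intro x
    rw [smul_mulVec, dotProduct_smul]
    refine smul_nonneg ?_ (hM.dotProduct_mulVec_nonneg x)
    rw [Complex.zero_le_real]
    exact hc

lemma aux_inv_sub {N : ℕ} {L : Matrix (Fin N) (Fin N) ℂ}
    (hL : IsUnit L.det) (h1L : IsUnit (1 + L).det) :
    (L * (1 + L))⁻¹ = L⁻¹ - (1 + L)⁻¹ := by
  apply Matrix.inv_eq_right_inv
  have c1 : L * (1 + L) = (1 + L) * L := by rw [mul_add, add_mul, mul_one, one_mul]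
  rw [mul_sub, c1, mul_assoc, Matrix.mul_nonsing_inv _ hL, mul_one, ← c1, mul_assoc,
    Matrix.mul_nonsing_inv _ h1L, mul_one, add_sub_cancel_right]

lemma aux_key {N n : ℕ} {k : Fin n → ℕ}
    (U : (i : Fin n) → Matrix (Fin N) (Fin (k i)) ℂ)
    (hU : ∀ i, (U i)ᴴ * U i = 1)
    {L : Matrix (Fin N) (Fin N) ℂ} (hL : L.PosDef) :
    (L⁻¹ + Delta U L).PosDef := by
  have h1L : (1 + L).PosDef := Matrix.PosDef.add Matrix.PosDef.one hL
  have hLsq : (L * L).PosSemidef := by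
    have h := posSemidef_conjTranspose_mul_self L
    rwa [hL.1.eq] at h
  have hLL : (L * (1 + L)).PosDef := by
    have h2 : L * (1 + L) = L + L * L := by rw [mul_add, mul_one]
    rw [h2]
    exact hL.add_posSemidef hLsq
  have hdetL : IsUnit L.det := hL.det_pos.ne'.isUnit
  have hdet1L : IsUnit (1 + L).det := h1L.det_pos.ne'.isUnit
  have hsum0 : (∑ i, U i * ((U i)ᴴ * L * U i)⁻¹ * (U i)ᴴ).PosSemidef := by
    refine Finset.sum_induction _ Matrix.PosSemidef
      (fun a b ha hb => ha.add hb) Matrix.PosSemidef.zero (fun i _ => ?_)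
    exact ((aux_posDef_conj hL (U i) (hU i)).inv).posSemidef.mul_mul_conjTranspose_same (U i)
  have hsum : ((n : ℂ)⁻¹ • (∑ i, U i * ((U i)ᴴ * L * U i)⁻¹ * (U i)ᴴ)).PosSemidef := by
    have hc : ((n : ℂ)⁻¹) = (((n : ℝ)⁻¹ : ℝ) : ℂ) := by push_cast; ring
    rw [hc]
    exact aux_smul_posSemidef _ (by positivity) hsum0
  have hrw : L⁻¹ + Delta U L
      = (n : ℂ)⁻¹ • (∑ i, U i * ((U i)ᴴ * L * U i)⁻¹ * (U i)ᴴ) + (L * (1 + L))⁻¹ := by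
    rw [Delta, aux_inv_sub hdetL hdet1L]
    abel
  rw [hrw]
  exact Matrix.PosDef.posSemidef_add hsum hLL.inv

/-- Proposition 1: the iterates L_{k+1} = (L_k⁻¹ + Δ(L_k))⁻¹ started from a Hermitian
positive definite L₀ are all Hermitian positive definite. -/
theorem picard_inverse_iterates_posDef {N n : ℕ} (hN : 0 < N) (hn : 0 < n)
    {k : Fin n → ℕ} (hk1 : ∀ i, 1 ≤ k i) (hkN : ∀ i, k i ≤ N)
    (U : (i : Fin n) → Matrix (Fin N) (Fin (k i)) ℂ)
    (hU : ∀ i, (U i)ᴴ * U i = 1)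
    (L : ℕ → Matrix (Fin N) (Fin N) ℂ)
    (hL0 : (L 0).PosDef)
    (hrec : ∀ m : ℕ, L (m + 1) = ((L m)⁻¹ + Delta U (L m))⁻¹) :
    ∀ m : ℕ, (L m).PosDef := by
  intro m
  induction m with
  | zero => exact hL0
  | succ p ih =>
    rw [hrec p]
    exact (aux_key U hU ih).inv
end

section
/- Let L be an N×N Hermitian positive definite complex matrix, let L^{1/2} denote its positive definite square root, and set Z(L) = (1/n)∑_{i=1}^n Uᵢ(Uᵢ*LUᵢ)⁻¹Uᵢ*. Then L^{1/2} Z(L) L^{1/2} ≼ I in the Loewner order; in particular, the smallest eigenvalue of the Hermitian matrix L^{1/2} Z(L) L^{1/2} is at most 1. -/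
open Matrix
open scoped ComplexOrder

/-- The square root of a positive semidefinite matrix (as in the older Mathlib). -/
noncomputable def Matrix.PosSemidef.sqrt {n 𝕜 : Type*} [Fintype n] [DecidableEq n] [RCLike 𝕜]
    {A : Matrix n n 𝕜} (hA : A.PosSemidef) : Matrix n n 𝕜 :=
  hA.1.eigenvectorUnitary.1 * diagonal ((↑) ∘ (√·) ∘ hA.1.eigenvalues) *
  (star hA.1.eigenvectorUnitary : Matrix n n 𝕜)

lemma Matrix.PosSemidef.posSemidef_sqrt {n 𝕜 : Type*} [Fintype n] [DecidableEq n] [RCLike 𝕜]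
    {A : Matrix n n 𝕜} (hA : A.PosSemidef) : hA.sqrt.PosSemidef := by
  unfold Matrix.PosSemidef.sqrt
  rw [star_eq_conjTranspose]
  refine Matrix.PosSemidef.mul_mul_conjTranspose_same ?_ _
  refine posSemidef_diagonal_iff.mpr fun i => ?_
  simp only [Function.comp_apply]
  exact RCLike.ofReal_nonneg.mpr (Real.sqrt_nonneg _)

lemma Matrix.PosSemidef.sqrt_mul_self {n 𝕜 : Type*} [Fintype n] [DecidableEq n] [RCLike 𝕜]
    {A : Matrix n n 𝕜} (hA : A.PosSemidef) : hA.sqrt * hA.sqrt = A := by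
  unfold Matrix.PosSemidef.sqrt
  have hCC : (star hA.1.eigenvectorUnitary : Matrix n n 𝕜) * hA.1.eigenvectorUnitary.1 = 1 :=
    Unitary.coe_star_mul_self _
  have hDD : diagonal ((↑) ∘ (√·) ∘ hA.1.eigenvalues) *
      diagonal ((↑) ∘ (√·) ∘ hA.1.eigenvalues) =
      diagonal (RCLike.ofReal ∘ hA.1.eigenvalues : n → 𝕜) := by
    rw [diagonal_mul_diagonal]
    congr 1
    funext v
    simp only [Function.comp_apply]
    rw [← RCLike.ofReal_mul, Real.mul_self_sqrt (hA.eigenvalues_nonneg v)]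
  calc _ = hA.1.eigenvectorUnitary.1 * (diagonal ((↑) ∘ (√·) ∘ hA.1.eigenvalues) *
        ((star hA.1.eigenvectorUnitary : Matrix n n 𝕜) * hA.1.eigenvectorUnitary.1) *
        diagonal ((↑) ∘ (√·) ∘ hA.1.eigenvalues)) *
        (star hA.1.eigenvectorUnitary : Matrix n n 𝕜) := by
          simp only [Matrix.mul_assoc]
    _ = A := by
      rw [hCC, Matrix.mul_one, hDD]
      conv_rhs => rw [hA.1.spectral_theorem, Unitary.conjStarAlgAut_apply]

private lemma psd_sum' {m : ℕ} {ι : Type*} (s : Finset ι) (f : ι → Matrix (Fin m) (Fin m) ℂ)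
    (h : ∀ i ∈ s, (f i).PosSemidef) : (∑ i ∈ s, f i).PosSemidef := by
  classical
  induction s using Finset.induction with
  | empty => simpa using Matrix.PosSemidef.zero
  | @insert a s ha ih =>
      rw [Finset.sum_insert ha]
      exact (h a (Finset.mem_insert_self a s)).add
        (ih fun i hi => h i (Finset.mem_insert_of_mem hi))

private lemma psd_smul' {m : ℕ} (c : ℝ) (hc : 0 ≤ c) (A : Matrix (Fin m) (Fin m) ℂ)
    (hA : A.PosSemidef) : ((c : ℂ) • A).PosSemidef := by
  refine Matrix.PosSemidef.of_dotProduct_mulVec_nonneg ?_ ?_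
  · unfold Matrix.IsHermitian
    rw [conjTranspose_smul, hA.1]
    norm_num
  · intro x
    rw [smul_mulVec, dotProduct_smul, smul_eq_mul]
    exact mul_nonneg (by exact_mod_cast hc) (hA.dotProduct_mulVec_nonneg x)

private lemma proj_psd' {m p : ℕ} (V : Matrix (Fin m) (Fin p) ℂ)
    (hdet : IsUnit (Vᴴ * V).det) (hH : (Vᴴ * V).IsHermitian) :
    ((1 : Matrix (Fin m) (Fin m) ℂ) - V * (Vᴴ * V)⁻¹ * Vᴴ).PosSemidef := by
  set P := V * (Vᴴ * V)⁻¹ * Vᴴ with hP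
  have hPH : Pᴴ = P := by
    simp only [hP, conjTranspose_mul, conjTranspose_conjTranspose, hH.inv.eq, Matrix.mul_assoc]
  have hPP : P * P = P := by
    calc P * P = V * ((Vᴴ * V)⁻¹ * ((Vᴴ * V) * ((Vᴴ * V)⁻¹ * Vᴴ))) := by
          simp only [hP, Matrix.mul_assoc]
      _ = P := by
          rw [← Matrix.mul_assoc ((Vᴴ * V)⁻¹), nonsing_inv_mul _ hdet, Matrix.one_mul]
          simp only [hP, Matrix.mul_assoc]
  have key : (1 - P) = (1 - P)ᴴ * (1 - P) := by
    rw [conjTranspose_sub, conjTranspose_one, hPH]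
    simp only [sub_mul, mul_sub, one_mul, mul_one, hPP]
    abel
  rw [key]
  exact posSemidef_conjTranspose_mul_self _

/-- With Z(L) = (1/n)∑ᵢ Uᵢ(Uᵢ*LUᵢ)⁻¹Uᵢ*, one has L^{1/2} Z(L) L^{1/2} ≼ I; in
particular the smallest eigenvalue of the Hermitian matrix L^{1/2} Z(L) L^{1/2} is
at most 1. -/
theorem sqrt_Z_sqrt_le_one {N n : ℕ} (hN : 0 < N) (hn : 0 < n)
    {k : Fin n → ℕ} (hk1 : ∀ i, 1 ≤ k i) (hkN : ∀ i, k i ≤ N)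
    (U : (i : Fin n) → Matrix (Fin N) (Fin (k i)) ℂ)
    (hU : ∀ i, (U i)ᴴ * U i = 1)
    (L : Matrix (Fin N) (Fin N) ℂ) (hL : L.PosDef) :
    (1 - hL.posSemidef.sqrt *
        ((n : ℂ)⁻¹ • (∑ i, U i * ((U i)ᴴ * L * U i)⁻¹ * (U i)ᴴ)) *
        hL.posSemidef.sqrt).PosSemidef ∧
      ∀ h : (hL.posSemidef.sqrt *
          ((n : ℂ)⁻¹ • (∑ i, U i * ((U i)ᴴ * L * U i)⁻¹ * (U i)ᴴ)) *
          hL.posSemidef.sqrt).IsHermitian,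
        (⨅ j, h.eigenvalues j) ≤ 1 := by
  classical
  set S := hL.posSemidef.sqrt with hSdef
  have hSH : Sᴴ = S := hL.posSemidef.posSemidef_sqrt.isHermitian
  have hSS : S * S = L := hL.posSemidef.sqrt_mul_self
  -- G i is positive definite
  have hG : ∀ i, ((U i)ᴴ * L * U i).PosDef := by
    intro i
    refine Matrix.PosDef.of_dotProduct_mulVec_pos (isHermitian_conjTranspose_mul_mul _ hL.1) fun x hx => ?_
    have hUx : (U i) *ᵥ x ≠ 0 := by
      intro h0
      apply hx
      have h1 : ((U i)ᴴ * U i) *ᵥ x = 0 := by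
        rw [← mulVec_mulVec, h0, mulVec_zero]
      rwa [hU i, one_mulVec] at h1
    have key : star x ⬝ᵥ ((U i)ᴴ * L * U i) *ᵥ x
        = star ((U i) *ᵥ x) ⬝ᵥ L *ᵥ ((U i) *ᵥ x) := by
      rw [star_mulVec, ← dotProduct_mulVec, mulVec_mulVec, mulVec_mulVec]
    rw [key]
    exact hL.dotProduct_mulVec_pos hUx
  set V : (i : Fin n) → Matrix (Fin N) (Fin (k i)) ℂ := fun i => S * U i with hVdef
  have hVV : ∀ i, (V i)ᴴ * V i = (U i)ᴴ * L * U i := by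
    intro i
    rw [hVdef]
    simp only [conjTranspose_mul, hSH, ← hSS, Matrix.mul_assoc]
  have hdet : ∀ i, IsUnit ((V i)ᴴ * V i).det := by
    intro i; rw [hVV i]; exact ((hG i).det_pos.ne').isUnit
  -- identify each summand
  have hPeq : ∀ i, S * (U i * ((U i)ᴴ * L * U i)⁻¹ * (U i)ᴴ) * S
      = V i * ((V i)ᴴ * V i)⁻¹ * (V i)ᴴ := by
    intro i
    rw [hVV i, hVdef]
    simp only [conjTranspose_mul, hSH, Matrix.mul_assoc]
  set M := S * ((n : ℂ)⁻¹ • (∑ i, U i * ((U i)ᴴ * L * U i)⁻¹ * (U i)ᴴ)) * S with hMdef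
  have hMP : M = (n : ℂ)⁻¹ • ∑ i, V i * ((V i)ᴴ * V i)⁻¹ * (V i)ᴴ := by
    rw [hMdef, mul_smul_comm, smul_mul_assoc]
    refine congrArg ((n : ℂ)⁻¹ • ·) ?_
    rw [Finset.mul_sum, Finset.sum_mul]
    exact Finset.sum_congr rfl fun i _ => hPeq i
  have hnne : (n : ℂ) ≠ 0 := Nat.cast_ne_zero.mpr hn.ne'
  have hone : (1 : Matrix (Fin N) (Fin N) ℂ) - M
      = (n : ℂ)⁻¹ • ∑ i, ((1 : Matrix (Fin N) (Fin N) ℂ)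
          - V i * ((V i)ᴴ * V i)⁻¹ * (V i)ᴴ) := by
    rw [hMP, Finset.sum_sub_distrib, smul_sub, Finset.sum_const, Finset.card_univ,
      Fintype.card_fin]
    refine congrArg (· - (n : ℂ)⁻¹ • ∑ i, V i * ((V i)ᴴ * V i)⁻¹ * (V i)ᴴ) ?_
    rw [← Nat.cast_smul_eq_nsmul ℂ, smul_smul, inv_mul_cancel₀ hnne, one_smul]
  have part1 : ((1 : Matrix (Fin N) (Fin N) ℂ) - M).PosSemidef := by
    rw [hone]
    have hc : ((n : ℂ)⁻¹) = (((n : ℝ)⁻¹ : ℝ) : ℂ) := by push_cast; ring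
    rw [hc]
    refine psd_smul' _ (by positivity) _ (psd_sum' _ _ fun i _ => ?_)
    exact proj_psd' (V i) (hdet i) ((hVV i) ▸ (hG i).1)
  refine ⟨part1, fun h => ?_⟩
  -- second part
  have hbdd : BddBelow (Set.range fun j => h.eigenvalues j) :=
    Set.Finite.bddBelow (Set.finite_range _)
  set j0 : Fin N := ⟨0, hN⟩
  refine le_trans (ciInf_le hbdd j0) ?_
  set v : Fin N → ℂ := ⇑(h.eigenvectorBasis j0) with hv
  have hvv : star v ⬝ᵥ v = 1 := by
    have h1 := (EuclideanSpace.inner_eq_star_dotProduct (h.eigenvectorBasis j0)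
      (h.eigenvectorBasis j0)).symm
    have h2 : (inner ℂ (h.eigenvectorBasis j0) (h.eigenvectorBasis j0) : ℂ) = 1 := by
      rw [inner_self_eq_norm_sq_to_K, h.eigenvectorBasis.orthonormal.1 j0]
      norm_num
    rw [← h2, EuclideanSpace.inner_eq_star_dotProduct, dotProduct_comm]
  have heig := h.eigenvalues_eq j0
  have hpos := part1.re_dotProduct_nonneg v
  rw [sub_mulVec, dotProduct_sub, one_mulVec, hvv, map_sub] at hpos
  have hre : RCLike.re (star v ⬝ᵥ M *ᵥ v) = h.eigenvalues j0 := heig.symm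
  rw [hre] at hpos
  simpa using hpos
end
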